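/- Let S be a standard graded polynomial ring in n variables over an F-finite field of characteristic p, I a homogeneous ideal with R = S/I an F-pure normal domain, and q = p^e. If the graded module (I^{[q]} :_S I)/I^{[q]} is isomorphic (as a graded module) to the (1−q)-th symbolic power ω_R^{(1−q)} shifted by n(q−1), then ν_e(𝔪) equals d_i for some i, where −d₁ < ⋯ < −d_r are the degrees of a minimal generating set of ω_R^{(1−q)} and 𝔪 is the homogeneous maximal ideal of R. Here ν_e(𝔪) := max{r ≥ 0 : 𝔪^r(I^{[q]}:I) ⊄ (x₁^{q},…,xₙ^{q})}. -/

import Mathlib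

set_option maxHeartbeats 1000000
set_option synthInstance.maxHeartbeats 400000

open MvPolynomial

/-- Let `S` be a standard graded polynomial ring in `n` variables over an
`F`-finite field of characteristic `p`, `I` a homogeneous ideal with `R = S/I` an `F`-pure
normal domain (`F`-purity being encoded via Fedder's criterion
`(I^{[q]} :_S I) ⊄ (x₁^q,…,xₙ^q)`), and `q = p^e`.  If the graded module
`(I^{[q]} :_S I)/I^{[q]}` is isomorphic, as a graded module, to the `(1−q)`-th symbolic power
`ω_R^{(1−q)}` shifted by `n(q−1)` — which we encode by saying that `(I^{[q]} :_S I)/I^{[q]}`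
is minimally generated by homogeneous elements `g₁,…,g_r` of degrees `n(q−1) − d₁, …,
n(q−1) − d_r`, where `−d₁ < ⋯ < −d_r` are the degrees of a minimal generating set of
`ω_R^{(1−q)}` — then `ν_e(𝔪) = d_i` for some `i`, where `𝔪` is the homogeneous maximal ideal
of `R` and `ν_e(𝔪) = max{r ≥ 0 : 𝔪^r·(I^{[q]}:I) ⊄ (x₁^q,…,xₙ^q)}`. -/
theorem stmt9 {k : Type*} [Field k] {p : ℕ} [Fact p.Prime] [CharP k p]
    (n e q r : ℕ) (hq : q = p ^ e)
    (I : Ideal (MvPolynomial (Fin n) k))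
    -- `I` is homogeneous
    (hhom : ∀ f ∈ I, ∀ i : ℕ, MvPolynomial.homogeneousComponent i f ∈ I)
    -- `R = S/I` is a normal domain
    (hdom : IsDomain (MvPolynomial (Fin n) k ⧸ I))
    (hnormal : IsIntegrallyClosed (MvPolynomial (Fin n) k ⧸ I))
    -- notation: `I^{[q]}`, `(x₁^q,…,xₙ^q)`, and the irrelevant maximal ideal of `S`
    (Iq : Ideal (MvPolynomial (Fin n) k))
    (hIq : Iq = Ideal.span ((fun f => f ^ q) '' (I : Set (MvPolynomial (Fin n) k))))
    (Xq : Ideal (MvPolynomial (Fin n) k))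
    (hXq : Xq = Ideal.span (Set.range fun j : Fin n => (X j : MvPolynomial (Fin n) k) ^ q))
    (mS : Ideal (MvPolynomial (Fin n) k))
    (hmS : mS = Ideal.span (Set.range (X : Fin n → MvPolynomial (Fin n) k)))
    -- `R` is `F`-pure (Fedder's criterion)
    (hFpure : ¬ (Iq.colon I ≤ Xq))
    -- the degrees `−d₁ < ⋯ < −d_r` of a minimal generating set of `ω_R^{(1−q)}`, transported
    -- through the graded isomorphism `(I^{[q]} :_S I)/I^{[q]} ≅ ω_R^{(1−q)}(n − nq)`:
    (d : Fin r → ℤ) (hd : StrictAnti d)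
    (c : Fin r → ℕ) (hc : ∀ i, (c i : ℤ) = (n : ℤ) * ((q : ℤ) - 1) - d i)
    (g : Fin r → MvPolynomial (Fin n) k)
    (hg1 : ∀ i, (g i).IsHomogeneous (c i))
    (hg2 : ∀ i, g i ∈ Iq.colon I)
    -- the `g i` generate `(I^{[q]} :_S I)/I^{[q]}` …
    (hgen : Iq.colon I = Iq ⊔ Ideal.span (Set.range g))
    -- … minimally
    (hmin : ∀ i, g i ∉ Iq ⊔ mS * Iq.colon I)
    -- `ν_e(𝔪) = max{r ≥ 0 : 𝔪^r·(I^{[q]}:I) ⊄ (x₁^q,…,xₙ^q)}`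
    (νe : ℕ)
    (hν1 : ¬ (mS ^ νe * Iq.colon I ≤ Xq))
    (hν2 : ∀ s : ℕ, νe < s → mS ^ s * Iq.colon I ≤ Xq) :
    ∃ i : Fin r, (νe : ℤ) = d i := by
  classical
  have hp : p.Prime := Fact.out
  have hq1 : 1 ≤ q := hq ▸ Nat.one_le_pow _ _ hp.pos
  -- membership criterion for Xq
  have hXqmem : ∀ f : MvPolynomial (Fin n) k,
      f ∈ Xq ↔ ∀ ν ∈ f.support, ∃ j : Fin n, q ≤ ν j := by
    intro f
    have hset : (Set.range fun j : Fin n => (X j : MvPolynomial (Fin n) k) ^ q)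
        = (fun s => monomial s (1 : k)) '' (Set.range fun j : Fin n => Finsupp.single j q) := by
      rw [← Set.range_comp]
      apply congrArg
      funext j
      simp [X_pow_eq_monomial, Function.comp]
    rw [hXq, hset, mem_ideal_span_monomial_image]
    constructor
    · intro h ν hν
      obtain ⟨s, ⟨j, rfl⟩, hs⟩ := h ν hν
      exact ⟨j, Finsupp.single_le_iff.mp hs⟩
    · intro h ν hν
      obtain ⟨j, hj⟩ := h ν hν
      exact ⟨Finsupp.single j q, ⟨j, rfl⟩, Finsupp.single_le_iff.mpr hj⟩
  have hXqnot : ∀ f : MvPolynomial (Fin n) k,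
      f ∉ Xq → ∃ ν ∈ f.support, ∀ j : Fin n, ν j < q := by
    intro f hf
    by_contra hcon
    push_neg at hcon
    exact hf ((hXqmem f).mpr hcon)
  -- membership criterion for mS
  have hmSmem : ∀ f : MvPolynomial (Fin n) k,
      (∀ ν ∈ f.support, ∃ j : Fin n, ν j ≠ 0) → f ∈ mS := by
    intro f hfs
    rw [hmS, ← Set.image_univ]
    rw [mem_ideal_span_X_image]
    intro m hm
    obtain ⟨j, hj⟩ := hfs m hm
    exact ⟨j, Set.mem_univ j, hj⟩
  -- Iq ≤ Xq
  have hpowq : ∀ f ∈ mS, f ^ q ∈ Xq := by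
    intro f hf
    rw [hmS] at hf
    refine Submodule.span_induction ?_ ?_ ?_ ?_ hf
    · rintro x ⟨j, rfl⟩
      rw [hXq]
      exact Ideal.subset_span ⟨j, rfl⟩
    · rw [zero_pow (by omega)]
      exact Xq.zero_mem
    · intro a b _ _ ha hb
      rw [hq, add_pow_char_pow, ← hq]
      exact Xq.add_mem ha hb
    · intro r a _ ha
      rw [smul_eq_mul, mul_pow]
      exact Xq.mul_mem_left _ ha
  haveI := hdom
  haveI : Nontrivial (MvPolynomial (Fin n) k ⧸ I) := hdom.toNontrivial
  have hIXq : Iq ≤ Xq := by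
    rw [hIq, Ideal.span_le]
    rintro _ ⟨f, hf, rfl⟩
    refine hpowq f (hmSmem f ?_)
    intro ν hν
    by_contra hcon
    push_neg at hcon
    have hν0 : ν = 0 := by ext j; exact hcon j
    have hc0 : coeff 0 f ≠ 0 := by
      rw [← hν0]; exact (mem_support_iff.mp hν)
    have h1 : C (coeff 0 f) ∈ I := by
      have := hhom f hf 0
      rwa [homogeneousComponent_zero] at this
    have hone : (1 : MvPolynomial (Fin n) k) ∈ I := by
      have := I.mul_mem_left (C (coeff 0 f)⁻¹) h1
      rwa [← C_mul, inv_mul_cancel₀ hc0, C_1] at this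
    have : (Ideal.Quotient.mk I 1 : MvPolynomial (Fin n) k ⧸ I) = 0 :=
      Ideal.Quotient.eq_zero_iff_mem.mpr hone
    rw [map_one] at this
    exact one_ne_zero this
  -- elements of mS ^ s have support in degrees ≥ s
  have L1 : ∀ s : ℕ, ∀ f ∈ mS ^ s, ∀ a ∈ f.support, s ≤ ∑ j : Fin n, a j := by
    intro s
    induction s with
    | zero => intro f _ a _; exact Nat.zero_le _
    | succ s ih =>
      intro f hf
      rw [pow_succ] at hf
      refine Submodule.mul_induction_on hf ?_ ?_
      · intro m hm x hx a ha
        have hsub := support_mul m x ha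
        rw [Finset.mem_add] at hsub
        obtain ⟨u, hu, v, hv, rfl⟩ := hsub
        have h1 : s ≤ ∑ j : Fin n, u j := ih m hm u hu
        have h2 : 1 ≤ ∑ j : Fin n, v j := by
          rw [hmS, ← Set.image_univ, mem_ideal_span_X_image] at hx
          obtain ⟨j, -, hj⟩ := hx v hv
          calc 1 ≤ v j := Nat.one_le_iff_ne_zero.mpr hj
          _ ≤ ∑ j : Fin n, v j := Finset.single_le_sum (fun _ _ => Nat.zero_le _) (Finset.mem_univ j)
        calc s + 1 ≤ (∑ j : Fin n, u j) + ∑ j : Fin n, v j := Nat.add_le_add h1 h2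
        _ = ∑ j : Fin n, (u + v) j := by rw [← Finset.sum_add_distrib]; rfl
      · intro x y hx hy a ha
        rcases Finset.mem_union.mp (support_add ha) with h | h
        · exact hx a h
        · exact hy a h
  -- monomials lie in the expected power of mS
  have hmono : ∀ τ : Fin n →₀ ℕ, (monomial τ (1 : k)) ∈ mS ^ (∑ j : Fin n, τ j) := by
    intro τ
    induction τ using Finsupp.induction with
    | zero =>
      have h0' : ∑ j : Fin n, (0 : Fin n →₀ ℕ) j = 0 := by simp
      rw [h0', pow_zero, Ideal.one_eq_top]
      exact Submodule.mem_top
    | single_add a b f ha hb ihf =>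
      have hsum : ∑ j : Fin n, (Finsupp.single a b + f) j
          = b + ∑ j : Fin n, f j := by
        have h1 : ∀ j : Fin n, (Finsupp.single a b + f) j
            = Finsupp.single a b j + f j := fun j => rfl
        simp only [h1]
        rw [Finset.sum_add_distrib]
        congr 1
        simp [Finsupp.single_apply]
      have hXa : (X a : MvPolynomial (Fin n) k) ∈ mS := by
        rw [hmS]; exact Ideal.subset_span ⟨a, rfl⟩
      have : (monomial (Finsupp.single a b + f) (1 : k))
          = (X a) ^ b * monomial f 1 := by
        rw [X_pow_eq_monomial, monomial_mul, one_mul]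
      rw [this, hsum, pow_add]
      exact Ideal.mul_mem_mul (Ideal.pow_mem_pow hXa b) ihf
  -- homogeneity: supports have the right degrees
  have hdeg : ∀ i : Fin r, ∀ b ∈ (g i).support, ∑ j : Fin n, b j = c i := by
    intro i b hb
    have h1 : Finsupp.weight 1 b = c i := (hg1 i) (mem_support_iff.mp hb)
    have h2 : b.degree = c i := by rw [Finsupp.degree_eq_weight_one]; exact h1
    rw [← h2]
    exact (Finset.sum_subset (Finset.subset_univ _)
      (fun x _ hx => Finsupp.notMem_support_iff.mp hx)).symm
  -- key extraction from ¬ (mS ^ s * colon ≤ Xq)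
  have key : ∀ s : ℕ, ¬ (mS ^ s * Iq.colon I ≤ Xq) →
      ∃ i : Fin r, ∃ m ∈ mS ^ s, m * g i ∉ Xq := by
    intro s hs
    by_contra hcon
    push_neg at hcon
    apply hs
    rw [Ideal.mul_le]
    intro m hm x hx
    rw [hgen] at hx
    obtain ⟨y, hy, z, hz, rfl⟩ := Submodule.mem_sup.mp hx
    rw [mul_add]
    refine Xq.add_mem (hIXq (Iq.mul_mem_left m hy)) ?_
    refine Submodule.span_induction (p := fun z _ => m * z ∈ Xq) ?_ ?_ ?_ ?_ hz
    · rintro _ ⟨i, rfl⟩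
      exact hcon i m hm
    · show m * 0 ∈ Xq
      rw [mul_zero]; exact Xq.zero_mem
    · intro a b _ _ ha hb
      show m * (a + b) ∈ Xq
      rw [mul_add]; exact Xq.add_mem ha hb
    · intro t a _ ha
      show m * (t • a) ∈ Xq
      rw [smul_eq_mul, mul_left_comm]
      exact Xq.mul_mem_left t ha
  have hcast : ((n * (q - 1) : ℕ) : ℤ) = (n : ℤ) * ((q : ℤ) - 1) := by
    rw [Nat.cast_mul, Nat.cast_sub hq1, Nat.cast_one]
  obtain ⟨i, m, hm, hmg⟩ := key νe hν1
  refine ⟨i, ?_⟩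
  -- upper bound : νe ≤ d i
  have hub : (νe : ℤ) ≤ d i := by
    obtain ⟨ν, hν, hνlt⟩ := hXqnot _ hmg
    have hsub := support_mul m (g i) hν
    rw [Finset.mem_add] at hsub
    obtain ⟨a, ha, b, hb, rfl⟩ := hsub
    have h1 : νe ≤ ∑ j : Fin n, a j := L1 νe m hm a ha
    have h2 : ∑ j : Fin n, b j = c i := hdeg i b hb
    have h3 : ∑ j : Fin n, (a + b) j ≤ n * (q - 1) := by
      calc ∑ j : Fin n, (a + b) j ≤ ∑ _j : Fin n, (q - 1) :=
        Finset.sum_le_sum (fun j _ => by have := hνlt j; omega)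
      _ = n * (q - 1) := by
        rw [Finset.sum_const, Finset.card_univ, Fintype.card_fin, smul_eq_mul]
    have h4 : νe + c i ≤ n * (q - 1) := by
      have : ∑ j : Fin n, (a + b) j = (∑ j : Fin n, a j) + ∑ j : Fin n, b j := by
        rw [← Finset.sum_add_distrib]; rfl
      omega
    have h5 := (Nat.cast_le (α := ℤ)).mpr h4
    rw [Nat.cast_add, hcast] at h5
    have h6 := hc i
    linarith only [h5, h6]
  -- lower bound : d i ≤ νe
  have hgX : g i ∉ Xq := fun h => hmg (Xq.mul_mem_left m h)
  obtain ⟨μ, hμ, hμlt⟩ := hXqnot _ hgX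
  set τ : Fin n →₀ ℕ := Finsupp.equivFunOnFinite.symm (fun j => q - 1 - μ j) with hτdef
  have hτ : ∀ j, τ j = q - 1 - μ j := fun j => rfl
  have hτg : monomial τ (1 : k) * g i ∉ Xq := by
    intro hmem
    have hco : coeff (τ + μ) (monomial τ (1 : k) * g i) = coeff μ (g i) := by
      rw [coeff_monomial_mul, one_mul]
    have hsupp : τ + μ ∈ (monomial τ (1 : k) * g i).support := by
      rw [mem_support_iff, hco]
      exact mem_support_iff.mp hμ
    obtain ⟨j, hj⟩ := (hXqmem _).mp hmem (τ + μ) hsupp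
    have : (τ + μ) j = q - 1 := by
      have h := hμlt j
      rw [Finsupp.add_apply, hτ j]
      omega
    omega
  have hτle : (∑ j : Fin n, τ j) ≤ νe := by
    by_contra hcon
    push_neg at hcon
    exact hτg (hν2 _ hcon (Ideal.mul_mem_mul (hmono τ) (hg2 i)))
  have hτsum : (∑ j : Fin n, τ j) + c i = n * (q - 1) := by
    have h2 : ∑ j : Fin n, μ j = c i := hdeg i μ hμ
    have h3 : ∑ j : Fin n, (τ j + μ j) = ∑ _j : Fin n, (q - 1) := by
      refine Finset.sum_congr rfl (fun j _ => ?_)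
      have := hμlt j
      rw [hτ j]
      omega
    rw [Finset.sum_add_distrib, h2] at h3
    rw [h3, Finset.sum_const, Finset.card_univ, Fintype.card_fin, smul_eq_mul]
  -- conclude
  have h7 : ((∑ j : Fin n, τ j : ℕ) : ℤ) + (c i : ℤ) = (n : ℤ) * ((q : ℤ) - 1) := by
    rw [← Nat.cast_add, hτsum, hcast]
  have h8 := hc i
  have h9 : ((∑ j : Fin n, τ j : ℕ) : ℤ) ≤ (νe : ℤ) := Nat.cast_le.mpr hτle
  have h10 := hc i
  linarith only [h7, h8, h9, hub, h10]
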